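/- Let E be a real inner product space, let b ∈ E be a fixed vector, and for y ∈ E, y ≠ 0, set α(y) = ‖y‖, β(y) = ⟪b, y⟫ and s(y) = β(y)/α(y). Let Q : ℝ → ℝ be twice differentiable, and write Λ₁(y) for the derivative of α at y in direction b, Λ₂(y) for the second derivative of α at y at (b, b), Θ₁(y) for the derivative of y ↦ Q(s(y)) at y in direction b, and Θ₂(y) for its second derivative at (b, b). Then for every y ≠ 0: α(y)·Θ₂(y) + 2·Λ₁(y)·Θ₁(y) + Λ₂(y)·Q(s(y)) = ((‖b‖² - s(y)²)/‖y‖)·[ (‖b‖² - s(y)²)·Q''(s(y)) - s(y)·Q'(s(y)) + Q(s(y)) ]. -/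

import Mathlib

open scoped RealInnerProductSpace

section Aux

variable {E : Type*} [NormedAddCommGroup E] [InnerProductSpace ℝ E]

/-- Derivative of the norm in a real inner product space at a nonzero point. -/
lemma aux_hasFDerivAt_norm {y : E} (hy : y ≠ 0) :
    HasFDerivAt (fun z : E => ‖z‖) ((‖y‖ : ℝ)⁻¹ • innerSL ℝ y) y := by
  have h1 : HasFDerivAt (fun z : E => ⟪z, z⟫)
      ((fderivInnerCLM ℝ (y, y)).comp
        ((ContinuousLinearMap.id ℝ E).prod (ContinuousLinearMap.id ℝ E))) y :=
    (hasFDerivAt_id y).inner ℝ (hasFDerivAt_id y)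
  have hpos : (0 : ℝ) < ⟪y, y⟫ := by
    rw [real_inner_self_eq_norm_sq]
    exact pow_pos (norm_pos_iff.2 hy) 2
  have h2 : HasDerivAt Real.sqrt (1 / (2 * Real.sqrt ⟪y, y⟫)) ⟪y, y⟫ :=
    Real.hasDerivAt_sqrt (ne_of_gt hpos)
  have h3 := h2.comp_hasFDerivAt (f := fun z : E => ⟪z, z⟫) y h1
  have heq : (fun z : E => ‖z‖) = fun z : E => Real.sqrt ⟪z, z⟫ := by
    funext z
    rw [real_inner_self_eq_norm_sq, Real.sqrt_sq (norm_nonneg z)]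
  rw [heq]
  refine h3.congr_fderiv ?_
  have hsq : Real.sqrt ⟪y, y⟫ = ‖y‖ := by
    rw [real_inner_self_eq_norm_sq, Real.sqrt_sq (norm_nonneg y)]
  ext v
  simp [hsq, fderivInnerCLM_apply, real_inner_comm]
  have hr : ‖y‖ ≠ 0 := norm_ne_zero_iff.2 hy
  field_simp
  ring

end Aux

set_option maxHeartbeats 2000000

/-- with `Λ₁ = bⁱα_{yⁱ}`, `Λ₂ = bⁱbʲα_{yⁱyʲ}`, `Θ₁ = bⁱ(Q∘s)_{yⁱ}`,
`Θ₂ = bⁱbʲ(Q∘s)_{yⁱyʲ}`, for the Euclidean norm `α(y) = ‖y‖` and `s = ⟪b,y⟫/‖y‖`: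
`α·Θ₂ + 2Λ₁Θ₁ + Λ₂·Q(s) = ((‖b‖² - s²)/‖y‖)·[(‖b‖² - s²)Q'' - sQ' + Q]`. -/
theorem stmt_10 {E : Type*} [NormedAddCommGroup E] [InnerProductSpace ℝ E]
    (b : E) (α : E → ℝ) (hα : α = fun y => ‖y‖)
    (s : E → ℝ) (hs : s = fun y => ⟪b, y⟫ / ‖y‖)
    (Q : ℝ → ℝ) (hQ1 : Differentiable ℝ Q) (hQ2 : Differentiable ℝ (deriv Q))
    (Λ₁ Λ₂ Θ₁ Θ₂ : E → ℝ)
    (hΛ₁ : Λ₁ = fun y => fderiv ℝ α y b)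
    (hΛ₂ : Λ₂ = fun y => fderiv ℝ (fderiv ℝ α) y b b)
    (hΘ₁ : Θ₁ = fun y => fderiv ℝ (fun z => Q (s z)) y b)
    (hΘ₂ : Θ₂ = fun y => fderiv ℝ (fderiv ℝ (fun z => Q (s z))) y b b) :
    ∀ y : E, y ≠ 0 →
      α y * Θ₂ y + 2 * Λ₁ y * Θ₁ y + Λ₂ y * Q (s y)
        = ((‖b‖ ^ 2 - (s y) ^ 2) / ‖y‖) *
            ((‖b‖ ^ 2 - (s y) ^ 2) * deriv (deriv Q) (s y)
              - s y * deriv Q (s y) + Q (s y)) := by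
  intro y hy
  have hr0 : ‖y‖ ≠ 0 := norm_ne_zero_iff.2 hy
  -- the derivative of `s`
  set D : E → E →L[ℝ] ℝ := fun z =>
    (‖z‖ : ℝ)⁻¹ • innerSL ℝ b - (⟪b, z⟫ * ((‖z‖ : ℝ) ^ 3)⁻¹) • innerSL ℝ z with hD
  have hS : ∀ z : E, z ≠ 0 → HasFDerivAt s (D z) z := by
    intro z hz
    have hz0 : ‖z‖ ≠ 0 := norm_ne_zero_iff.2 hz
    have hninv : HasFDerivAt (fun w : E => (‖w‖ : ℝ)⁻¹)
        ((-((‖z‖ : ℝ) ^ 2)⁻¹) • ((‖z‖ : ℝ)⁻¹ • innerSL ℝ z)) z := by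
      simpa [Function.comp_def] using
        (hasDerivAt_inv hz0).comp_hasFDerivAt (f := fun w : E => ‖w‖) z
          (aux_hasFDerivAt_norm hz)
    have hc : HasFDerivAt (fun w : E => ⟪b, w⟫) (innerSL ℝ b) z := (innerSL ℝ b).hasFDerivAt
    have hmul := hc.mul hninv
    have hfun : s = fun w : E => ⟪b, w⟫ * (‖w‖ : ℝ)⁻¹ := by
      rw [hs]; funext w; rw [div_eq_mul_inv]
    rw [hfun]
    refine hmul.congr_fderiv ?_
    ext v
    simp [hD, smul_smul]
    field_simp
    ring
  -- value of `D z` in direction `b`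
  have hDb : ∀ z : E, D z b = ⟪b, b⟫ * (‖z‖ : ℝ)⁻¹ - ⟪b, z⟫ ^ 2 * ((‖z‖ : ℝ) ^ 3)⁻¹ := by
    intro z
    simp [hD, real_inner_comm z b]
    ring
  -- Λ₁
  have hv1 : Λ₁ y = ⟪b, y⟫ * (‖y‖ : ℝ)⁻¹ := by
    simp only [hΛ₁, hα]
    rw [(aux_hasFDerivAt_norm hy).fderiv]
    simp [real_inner_comm y b, mul_comm]
  -- the derivative of α as a function, near y
  set G : E → E →L[ℝ] ℝ := fun z => (‖z‖ : ℝ)⁻¹ • innerSL ℝ z with hG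
  have hmem : {(0 : E)}ᶜ ∈ nhds y := isOpen_compl_singleton.mem_nhds (by simpa using hy)
  have hGev : fderiv ℝ α =ᶠ[nhds y] G := by
    filter_upwards [hmem] with z hz
    rw [hα]
    exact (aux_hasFDerivAt_norm (by simpa using hz)).fderiv
  have hndiff : DifferentiableAt ℝ (fun z : E => ‖z‖) y :=
    (aux_hasFDerivAt_norm hy).differentiableAt
  have hninvdiff : DifferentiableAt ℝ (fun z : E => (‖z‖ : ℝ)⁻¹) y := hndiff.inv hr0
  have hlin : DifferentiableAt ℝ (fun z : E => (innerSL ℝ z : E →L[ℝ] ℝ)) y :=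
    (innerSL ℝ : E →L[ℝ] E →L[ℝ] ℝ).differentiableAt
  have hGdiff : DifferentiableAt ℝ G y := hninvdiff.smul hlin
  -- Λ₂
  have hv2 : Λ₂ y = ⟪b, b⟫ * (‖y‖ : ℝ)⁻¹ - ⟪b, y⟫ ^ 2 * ((‖y‖ : ℝ) ^ 3)⁻¹ := by
    have h3 : (fun z : E => G z b) = s := by
      funext z
      rw [hs]
      simp [hG, real_inner_comm z b, div_eq_mul_inv]
      ring
    have h2 := fderiv_clm_apply (c := G) (u := fun _ : E => b) hGdiff (differentiableAt_const b)
    have h4 : fderiv ℝ G y b b = fderiv ℝ (fun z : E => G z b) y b := by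
      rw [h2]; simp
    simp only [hΛ₂]
    rw [hGev.fderiv_eq, h4, h3, (hS y hy).fderiv, hDb]
  -- Q ∘ s derivative
  have hQs : ∀ z : E, z ≠ 0 → HasFDerivAt (fun w => Q (s w)) (deriv Q (s z) • D z) z := by
    intro z hz
    simpa [Function.comp_def] using ((hQ1 (s z)).hasDerivAt).comp_hasFDerivAt z (hS z hz)
  -- Θ₁
  have hv3 : Θ₁ y = deriv Q (s y) * (⟪b, b⟫ * (‖y‖ : ℝ)⁻¹ - ⟪b, y⟫ ^ 2 * ((‖y‖ : ℝ) ^ 3)⁻¹) := by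
    simp only [hΘ₁]
    rw [(hQs y hy).fderiv]
    simp [hDb]
  -- Θ₂
  set F : E → E →L[ℝ] ℝ := fun z => deriv Q (s z) • D z with hF
  have hFev : fderiv ℝ (fun z => Q (s z)) =ᶠ[nhds y] F := by
    filter_upwards [hmem] with z hz
    exact (hQs z (by simpa using hz)).fderiv
  have hsdiff : DifferentiableAt ℝ s y := (hS y hy).differentiableAt
  have hqsdiff : DifferentiableAt ℝ (fun z : E => deriv Q (s z)) y :=
    DifferentiableAt.comp y (hQ2 (s y)) hsdiff
  have hcdiff : DifferentiableAt ℝ (fun z : E => ⟪b, z⟫) y := (innerSL ℝ b).differentiableAt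
  have hn3invdiff : DifferentiableAt ℝ (fun z : E => ((‖z‖ : ℝ) ^ 3)⁻¹) y :=
    (hndiff.pow 3).inv (pow_ne_zero 3 hr0)
  have hDdiff : DifferentiableAt ℝ D y := by
    apply DifferentiableAt.sub
    · exact hninvdiff.smul (differentiableAt_const _)
    · exact (hcdiff.mul hn3invdiff).smul hlin
  have hFdiff : DifferentiableAt ℝ F y := hqsdiff.smul hDdiff
  -- scalar form of `fun z => F z b`
  have hFb : (fun z : E => F z b)
      = fun z : E => deriv Q (s z) *
          (⟪b, b⟫ * (‖z‖ : ℝ)⁻¹ - ⟪b, z⟫ ^ 2 * ((‖z‖ : ℝ) ^ 3)⁻¹) := by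
    funext z
    simp [hF, hDb]
  -- derivative of the scalar form
  have h_qs : HasFDerivAt (fun z : E => deriv Q (s z)) (deriv (deriv Q) (s y) • D y) y := by
    simpa [Function.comp_def] using ((hQ2 (s y)).hasDerivAt).comp_hasFDerivAt y (hS y hy)
  have h_n := aux_hasFDerivAt_norm hy
  have h_ninv : HasFDerivAt (fun w : E => (‖w‖ : ℝ)⁻¹)
      ((-((‖y‖ : ℝ) ^ 2)⁻¹) • ((‖y‖ : ℝ)⁻¹ • innerSL ℝ y)) y := by
    simpa [Function.comp_def] using
      (hasDerivAt_inv hr0).comp_hasFDerivAt (f := fun w : E => ‖w‖) y h_n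
  have h_t1 := h_ninv.const_mul (⟪b, b⟫ : ℝ)
  have h_c : HasFDerivAt (fun w : E => ⟪b, w⟫) (innerSL ℝ b) y := (innerSL ℝ b).hasFDerivAt
  have h_n3 : HasFDerivAt (fun w : E => (‖w‖ : ℝ) ^ 3)
      ((3 * (‖y‖ : ℝ) ^ 2) • ((‖y‖ : ℝ)⁻¹ • innerSL ℝ y)) y := by
    have := (hasDerivAt_pow 3 (‖y‖ : ℝ)).comp_hasFDerivAt (f := fun w : E => ‖w‖) y h_n
    simpa [Function.comp_def] using this
  have h_n3inv : HasFDerivAt (fun w : E => ((‖w‖ : ℝ) ^ 3)⁻¹)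
      ((-(((‖y‖ : ℝ) ^ 3) ^ 2)⁻¹) • ((3 * (‖y‖ : ℝ) ^ 2) • ((‖y‖ : ℝ)⁻¹ • innerSL ℝ y))) y := by
    simpa [Function.comp_def] using (hasDerivAt_inv (pow_ne_zero 3 hr0)).comp_hasFDerivAt
      (f := fun w : E => (‖w‖ : ℝ) ^ 3) y h_n3
  have h_csq : HasFDerivAt (fun w : E => (⟪b, w⟫ : ℝ) ^ 2)
      ((2 * ⟪b, y⟫) • innerSL ℝ b) y := by
    have := (hasDerivAt_pow 2 (⟪b, y⟫ : ℝ)).comp_hasFDerivAt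
      (f := fun w : E => (⟪b, w⟫ : ℝ)) y h_c
    simpa [Function.comp_def] using this
  have h_t2 := h_csq.mul h_n3inv
  have h_g := h_qs.mul (h_t1.sub h_t2)
  have hv4 : Θ₂ y = deriv (deriv Q) (s y) *
        (⟪b, b⟫ * (‖y‖ : ℝ)⁻¹ - ⟪b, y⟫ ^ 2 * ((‖y‖ : ℝ) ^ 3)⁻¹) ^ 2
      + deriv Q (s y) *
        (3 * ⟪b, y⟫ ^ 3 * ((‖y‖ : ℝ) ^ 5)⁻¹ - 3 * ⟪b, y⟫ * ⟪b, b⟫ * ((‖y‖ : ℝ) ^ 3)⁻¹) := by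
    have h2 := fderiv_clm_apply (c := F) (u := fun _ : E => b) hFdiff (differentiableAt_const b)
    have h4 : fderiv ℝ (fderiv ℝ (fun z => Q (s z))) y b b
        = fderiv ℝ (fun z : E => F z b) y b := by
      rw [hFev.fderiv_eq, h2]; simp
    simp only [hΘ₂]
    rw [h4, hFb, HasFDerivAt.fderiv (f := fun z : E => deriv Q (s z) * (⟪b, b⟫ * (‖z‖ : ℝ)⁻¹ - ⟪b, z⟫ ^ 2 * ((‖z‖ : ℝ) ^ 3)⁻¹)) h_g]
    simp [hDb, real_inner_comm y b, smul_smul]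
    field_simp
    ring
  -- final computation
  have hsy : s y = ⟪b, y⟫ / ‖y‖ := by rw [hs]
  have hB : (‖b‖ : ℝ) ^ 2 = ⟪b, b⟫ := (real_inner_self_eq_norm_sq b).symm
  simp only [hα]
  rw [hv1, hv2, hv3, hv4, hB, hsy]
  field_simp
  ring
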